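/- Let Ω ⊂ ℝⁿ be a bounded domain, ε > 0, α ≥ 0, β > 0 with α + β = 1, and F : Γ_ε → ℝ bounded Borel. Then there exists a bounded Borel function u : Ω_ε → ℝ with u = F on Γ_ε satisfying the dynamic programming principle: u(x) = (α/2) sup_{B_ε(x)} u + (α/2) inf_{B_ε(x)} u + β ⨍_{B_ε(x)} u dy for all x ∈ Ω. Moreover u is the uniform limit of the iterates u_{j+1} = T u_j started from u₀ = inf_{Γ_ε} F on Ω and u₀ = F on Γ_ε. -/

import Mathlib

open MeasureTheory Metric Set Classical Filter

def bdryStrip {n : ℕ} (Ω : Set (EuclideanSpace ℝ (Fin n))) (ε : ℝ) :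
    Set (EuclideanSpace ℝ (Fin n)) :=
  {x | x ∉ Ω ∧ Metric.infDist x Ω ≤ ε}

noncomputable def dppT {n : ℕ} (Ω : Set (EuclideanSpace ℝ (Fin n))) (ε α β : ℝ)
    (u : EuclideanSpace ℝ (Fin n) → ℝ) (x : EuclideanSpace ℝ (Fin n)) : ℝ :=
  if x ∈ Ω then
    α / 2 * sSup (u '' ball x ε) + α / 2 * sInf (u '' ball x ε) +
      β * ⨍ y in ball x ε, u y
  else u x

section Aux

variable {n : ℕ}

lemma measurable_supBall {v : EuclideanSpace ℝ (Fin n) → ℝ} {c ε : ℝ} (hε : 0 < ε)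
    (hb : ∀ y, |v y| ≤ c) : Measurable fun x => sSup (v '' ball x ε) := by
  apply LowerSemicontinuous.measurable
  intro x t ht
  have hne : (v '' ball x ε).Nonempty := ⟨v x, mem_image_of_mem v (mem_ball_self hε)⟩
  obtain ⟨a, ⟨y, hy, rfl⟩, hta⟩ := exists_lt_of_lt_csSup hne ht
  have hbdd : ∀ x' : EuclideanSpace ℝ (Fin n), BddAbove (v '' ball x' ε) := by
    intro x'; exact ⟨c, by rintro a ⟨y', _, rfl⟩; exact (abs_le.1 (hb y')).2⟩
  have hev : ∀ᶠ x' in nhds x, x' ∈ ball y ε :=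
    (isOpen_ball).mem_nhds (mem_ball_comm.1 hy)
  filter_upwards [hev] with x' h'
  exact lt_of_lt_of_le hta (le_csSup (hbdd x') (mem_image_of_mem v (mem_ball_comm.1 h')))

lemma measurable_infBall {v : EuclideanSpace ℝ (Fin n) → ℝ} {c ε : ℝ} (hε : 0 < ε)
    (hb : ∀ y, |v y| ≤ c) : Measurable fun x => sInf (v '' ball x ε) := by
  apply UpperSemicontinuous.measurable
  intro x t ht
  have hne : (v '' ball x ε).Nonempty := ⟨v x, mem_image_of_mem v (mem_ball_self hε)⟩
  obtain ⟨a, ⟨y, hy, rfl⟩, hta⟩ := exists_lt_of_csInf_lt hne ht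
  have hbdd : ∀ x' : EuclideanSpace ℝ (Fin n), BddBelow (v '' ball x' ε) := by
    intro x'; exact ⟨-c, by rintro a ⟨y', _, rfl⟩; exact (abs_le.1 (hb y')).1⟩
  have hev : ∀ᶠ x' in nhds x, x' ∈ ball y ε :=
    (isOpen_ball).mem_nhds (mem_ball_comm.1 hy)
  filter_upwards [hev] with x' h'
  exact lt_of_le_of_lt (csInf_le (hbdd x') (mem_image_of_mem v (mem_ball_comm.1 h'))) hta

lemma measurable_intBall {v : EuclideanSpace ℝ (Fin n) → ℝ} (hv : Measurable v) (ε : ℝ) :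
    Measurable fun x => ∫ y in ball x ε, v y := by
  have hset : MeasurableSet {p : EuclideanSpace ℝ (Fin n) × EuclideanSpace ℝ (Fin n) | dist p.2 p.1 < ε} :=
    (isOpen_lt (continuous_snd.dist continuous_fst) continuous_const).measurableSet
  have hm : StronglyMeasurable (Function.uncurry fun x y =>
      ({p : EuclideanSpace ℝ (Fin n) × EuclideanSpace ℝ (Fin n) | dist p.2 p.1 < ε}.indicator
        (fun p => v p.2)) (x, y)) := by
    have : Measurable ({p : EuclideanSpace ℝ (Fin n) × EuclideanSpace ℝ (Fin n) | dist p.2 p.1 < ε}.indicator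
        (fun p => v p.2)) := (hv.comp measurable_snd).indicator hset
    exact this.stronglyMeasurable
  have h2 := hm.integral_prod_right (ν := (volume : Measure (EuclideanSpace ℝ (Fin n))))
  have heq : (fun x => ∫ y in ball x ε, v y) = fun x => ∫ y,
      ({p : EuclideanSpace ℝ (Fin n) × EuclideanSpace ℝ (Fin n) | dist p.2 p.1 < ε}.indicator
        (fun p => v p.2)) (x, y) := by
    funext x
    rw [← integral_indicator measurableSet_ball]
    congr 1
  rw [heq]
  exact h2.measurable

lemma tendsto_rec_zero {α : ℝ} (hα0 : 0 ≤ α) (hα1 : α < 1) {M c : ℕ → ℝ}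
    (hM : ∀ j, 0 ≤ M j) (hrec : ∀ j, M (j + 1) ≤ α * M j + c j)
    (hc : Tendsto c atTop (nhds 0)) : Tendsto M atTop (nhds 0) := by
  rw [Metric.tendsto_atTop]
  intro δ hδ
  have hδ2 : 0 < (1 - α) * (δ / 2) := mul_pos (by linarith) (by linarith)
  obtain ⟨N, hN⟩ := (Metric.tendsto_atTop.1 hc) ((1 - α) * (δ / 2)) hδ2
  have key : ∀ k, M (N + k) ≤ α ^ k * M N + δ / 2 := by
    intro k
    induction k with
    | zero => simp; linarith [hM N]
    | succ k ih =>
      have h1 := hrec (N + k)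
      have h2 : c (N + k) ≤ (1 - α) * (δ / 2) := by
        have := hN (N + k) (Nat.le_add_right N k)
        rw [Real.dist_eq, sub_zero] at this
        exact le_of_lt (lt_of_abs_lt this)
      have h3 : α * M (N + k) ≤ α * (α ^ k * M N + δ / 2) :=
        mul_le_mul_of_nonneg_left ih hα0
      have h4 : M (N + k + 1) ≤ α * (α ^ k * M N + δ / 2) + (1 - α) * (δ / 2) := by linarith
      calc M (N + (k + 1)) = M (N + k + 1) := by ring_nf
        _ ≤ α * (α ^ k * M N + δ / 2) + (1 - α) * (δ / 2) := h4
        _ = α ^ (k + 1) * M N + δ / 2 := by ring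
  have hpow : Tendsto (fun k => α ^ k * M N) atTop (nhds 0) := by
    simpa using (tendsto_pow_atTop_nhds_zero_of_lt_one hα0 hα1).mul_const (M N)
  obtain ⟨K, hK⟩ := (Metric.tendsto_atTop.1 hpow) (δ / 2) (by linarith)
  refine ⟨N + K, fun j hj => ?_⟩
  have hjN : N ≤ j := le_trans (Nat.le_add_right N K) hj
  obtain ⟨k, rfl⟩ := Nat.exists_eq_add_of_le hjN
  have hkK : K ≤ k := by omega
  have h5 := hK k hkK
  rw [Real.dist_eq, sub_zero] at h5 ⊢
  have h1 : α ^ k * M N < δ / 2 := lt_of_abs_lt h5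
  have h2 := key k
  rw [abs_of_nonneg (hM _)]
  linarith

lemma ball_subset_union {Ω : Set (EuclideanSpace ℝ (Fin n))} {ε : ℝ} {x : EuclideanSpace ℝ (Fin n)}
    (hx : x ∈ Ω) : ball x ε ⊆ Ω ∪ bdryStrip Ω ε := by
  intro y hy
  by_cases hyΩ : y ∈ Ω
  · exact Or.inl hyΩ
  · refine Or.inr ⟨hyΩ, ?_⟩
    exact le_trans (Metric.infDist_le_dist_of_mem hx) (le_of_lt (mem_ball'.1 (mem_ball_comm.1 hy)))

lemma integrableOn_of_bounded {v : EuclideanSpace ℝ (Fin n) → ℝ} {c : ℝ}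
    (hv : Measurable v) (hb : ∀ y, |v y| ≤ c) {s : Set (EuclideanSpace ℝ (Fin n))}
    (hs : volume s < ⊤) : IntegrableOn v s volume := by
  refine Integrable.mono' (g := fun _ => c) (integrableOn_const hs.ne)
    hv.aestronglyMeasurable.restrict (ae_of_all _ fun y => ?_)
  simpa using hb y

lemma volume_ball_toReal_pos {ε : ℝ} (hε : 0 < ε) (x : EuclideanSpace ℝ (Fin n)) :
    0 < (volume (ball x ε)).toReal :=
  ENNReal.toReal_pos (measure_ball_pos volume x hε).ne' measure_ball_lt_top.ne

lemma setAverage_ball_le {ε c : ℝ} (hε : 0 < ε) {v : EuclideanSpace ℝ (Fin n) → ℝ}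
    (hv : Measurable v) {cb : ℝ} (hvb : ∀ y, |v y| ≤ cb) {x : EuclideanSpace ℝ (Fin n)}
    (hc : ∀ y ∈ ball x ε, v y ≤ c) : ⨍ y in ball x ε, v y ≤ c := by
  rw [setAverage_eq]
  have hpos := volume_ball_toReal_pos hε x
  have h1 : ∫ y in ball x ε, v y ≤ ∫ _y in ball x ε, c := by
    refine setIntegral_mono_on (integrableOn_of_bounded hv hvb measure_ball_lt_top)
      (integrableOn_const measure_ball_lt_top.ne) measurableSet_ball hc
  rw [setIntegral_const] at h1
  have : (volume (ball x ε)).toReal⁻¹ * ∫ y in ball x ε, v y ≤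
      (volume (ball x ε)).toReal⁻¹ * ((volume (ball x ε)).toReal * c) := by
    apply mul_le_mul_of_nonneg_left _ (inv_nonneg.2 hpos.le)
    simpa [smul_eq_mul, measureReal_def] using h1
  simpa [smul_eq_mul, measureReal_def, inv_mul_cancel_left₀ hpos.ne'] using this

lemma setAverage_ball_ge {ε c : ℝ} (hε : 0 < ε) {v : EuclideanSpace ℝ (Fin n) → ℝ}
    (hv : Measurable v) {cb : ℝ} (hvb : ∀ y, |v y| ≤ cb) {x : EuclideanSpace ℝ (Fin n)}
    (hc : ∀ y ∈ ball x ε, c ≤ v y) : c ≤ ⨍ y in ball x ε, v y := by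
  have h := setAverage_ball_le (c := -c) hε (hv.neg) (cb := cb)
    (fun y => by simpa using hvb y) (x := x) (fun y hy => by simpa using neg_le_neg (hc y hy))
  rw [setAverage_eq] at h ⊢
  rw [integral_neg'] at h
  simp only [smul_eq_mul, mul_neg] at h ⊢
  linarith

end Aux
section Seq

variable {n : ℕ} {Ω : Set (EuclideanSpace ℝ (Fin n))} {ε α β : ℝ}
  {F : EuclideanSpace ℝ (Fin n) → ℝ} {C : ℝ}

noncomputable def dppSeq (Ω : Set (EuclideanSpace ℝ (Fin n))) (ε α β : ℝ)
    (F : EuclideanSpace ℝ (Fin n) → ℝ) : ℕ → EuclideanSpace ℝ (Fin n) → ℝ :=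
  fun j => (dppT Ω ε α β)^[j] (fun x => if x ∈ Ω then sInf (F '' bdryStrip Ω ε) else F x)

noncomputable def dppLim (Ω : Set (EuclideanSpace ℝ (Fin n))) (ε α β : ℝ)
    (F : EuclideanSpace ℝ (Fin n) → ℝ) : EuclideanSpace ℝ (Fin n) → ℝ :=
  fun x => ⨆ j, dppSeq Ω ε α β F j x

lemma dppSeq_zero : dppSeq Ω ε α β F 0 =
    fun x => if x ∈ Ω then sInf (F '' bdryStrip Ω ε) else F x := rfl

lemma dppSeq_succ (j : ℕ) :
    dppSeq Ω ε α β F (j + 1) = dppT Ω ε α β (dppSeq Ω ε α β F j) :=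
  Function.iterate_succ_apply' _ _ _

lemma dppT_notin {v : EuclideanSpace ℝ (Fin n) → ℝ} {x : EuclideanSpace ℝ (Fin n)}
    (hx : x ∉ Ω) : dppT Ω ε α β v x = v x := if_neg hx

lemma dppT_mem {v : EuclideanSpace ℝ (Fin n) → ℝ} {x : EuclideanSpace ℝ (Fin n)}
    (hx : x ∈ Ω) : dppT Ω ε α β v x =
      α / 2 * sSup (v '' ball x ε) + α / 2 * sInf (v '' ball x ε) +
        β * ⨍ y in ball x ε, v y := if_pos hx

lemma dppSeq_notin' {x : EuclideanSpace ℝ (Fin n)} (hx : x ∉ Ω) (j : ℕ) :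
    dppSeq Ω ε α β F j x = F x := by
  induction j with
  | zero => simp [dppSeq_zero, hx]
  | succ j ih => rw [dppSeq_succ, dppT_notin hx, ih]

lemma dppT_bound (hε : 0 < ε) (hα : 0 ≤ α) (hβ : 0 ≤ β) (hαβ : α + β = 1)
    {v : EuclideanSpace ℝ (Fin n) → ℝ} (hvm : Measurable v) (hv : ∀ y, |v y| ≤ C)
    (x : EuclideanSpace ℝ (Fin n)) : |dppT Ω ε α β v x| ≤ C := by
  by_cases hx : x ∈ Ω
  · rw [dppT_mem hx]
    have hne : (v '' ball x ε).Nonempty := ⟨v x, mem_image_of_mem v (mem_ball_self hε)⟩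
    have hbddA : BddAbove (v '' ball x ε) :=
      ⟨C, by rintro a ⟨y, _, rfl⟩; exact (abs_le.1 (hv y)).2⟩
    have hbddB : BddBelow (v '' ball x ε) :=
      ⟨-C, by rintro a ⟨y, _, rfl⟩; exact (abs_le.1 (hv y)).1⟩
    have hS1 : sSup (v '' ball x ε) ≤ C :=
      csSup_le hne (by rintro a ⟨y, _, rfl⟩; exact (abs_le.1 (hv y)).2)
    have hS2 : -C ≤ sSup (v '' ball x ε) :=
      le_trans (abs_le.1 (hv x)).1 (le_csSup hbddA (mem_image_of_mem v (mem_ball_self hε)))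
    have hI1 : sInf (v '' ball x ε) ≤ C :=
      le_trans (csInf_le hbddB (mem_image_of_mem v (mem_ball_self hε))) (abs_le.1 (hv x)).2
    have hI2 : -C ≤ sInf (v '' ball x ε) :=
      le_csInf hne (by rintro a ⟨y, _, rfl⟩; exact (abs_le.1 (hv y)).1)
    have hA1 : ⨍ y in ball x ε, v y ≤ C :=
      setAverage_ball_le hε hvm hv (fun y _ => (abs_le.1 (hv y)).2)
    have hA2 : -C ≤ ⨍ y in ball x ε, v y :=
      setAverage_ball_ge hε hvm hv (fun y _ => (abs_le.1 (hv y)).1)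
    rw [abs_le]
    constructor
    · nlinarith
    · nlinarith
  · rw [dppT_notin hx]; exact hv x

lemma sInf_boundary_bound (hC : 0 ≤ C) (hFb : ∀ x, |F x| ≤ C) :
    |sInf (F '' bdryStrip Ω ε)| ≤ C := by
  rcases eq_empty_or_nonempty (F '' bdryStrip Ω ε) with h | h
  · rw [h, Real.sInf_empty, abs_zero]; exact hC
  · obtain ⟨a, y, hy, rfl⟩ := h
    have hbdd : BddBelow (F '' bdryStrip Ω ε) :=
      ⟨-C, by rintro a ⟨z, _, rfl⟩; exact (abs_le.1 (hFb z)).1⟩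
    rw [abs_le]
    constructor
    · exact le_csInf ⟨F y, mem_image_of_mem F hy⟩
        (by rintro a ⟨z, _, rfl⟩; exact (abs_le.1 (hFb z)).1)
    · exact le_trans (csInf_le hbdd (mem_image_of_mem F hy)) (abs_le.1 (hFb y)).2

lemma dppSeq_bound (hε : 0 < ε) (hα : 0 ≤ α) (hβ : 0 ≤ β) (hαβ : α + β = 1)
    (hΩo : IsOpen Ω) (hF : Measurable F) (hC : 0 ≤ C) (hFb : ∀ x, |F x| ≤ C) :
    ∀ j, Measurable (dppSeq Ω ε α β F j) ∧ (∀ x, |dppSeq Ω ε α β F j x| ≤ C) := by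
  intro j
  induction j with
  | zero =>
    constructor
    · exact Measurable.ite hΩo.measurableSet measurable_const hF
    · intro x
      rw [dppSeq_zero]
      by_cases hx : x ∈ Ω
      · simpa [hx] using sInf_boundary_bound (Ω := Ω) (ε := ε) hC hFb
      · simpa [hx] using hFb x
  | succ j ih =>
    obtain ⟨ihm, ihb⟩ := ih
    have hb : ∀ x, |dppSeq Ω ε α β F (j + 1) x| ≤ C := by
      intro x
      rw [dppSeq_succ]
      exact dppT_bound hε hα hβ hαβ ihm ihb x
    refine ⟨?_, hb⟩
    rw [dppSeq_succ]
    unfold dppT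
    refine Measurable.ite hΩo.measurableSet ?_ ihm
    refine Measurable.add (Measurable.add ?_ ?_) ?_
    · exact (measurable_supBall hε ihb).const_mul _
    · exact (measurable_infBall hε ihb).const_mul _
    · have : Measurable fun x => ⨍ y in ball x ε, dppSeq Ω ε α β F j y := by
        have h1 : (fun x => ⨍ y in ball x ε, dppSeq Ω ε α β F j y) =
            fun x => (volume (ball (0 : EuclideanSpace ℝ (Fin n)) ε)).toReal⁻¹ *
              ∫ y in ball x ε, dppSeq Ω ε α β F j y := by
          funext x; rw [setAverage_eq, smul_eq_mul, measureReal_def, Measure.addHaar_ball_center]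
        rw [h1]
        exact (measurable_intBall ihm ε).const_mul _
      exact this.const_mul _

end Seq
section Mono

variable {n : ℕ} {Ω : Set (EuclideanSpace ℝ (Fin n))} {ε α β : ℝ}
  {F : EuclideanSpace ℝ (Fin n) → ℝ} {C : ℝ}

lemma dppT_mono (hε : 0 < ε) (hα : 0 ≤ α) (hβ : 0 ≤ β)
    {v w : EuclideanSpace ℝ (Fin n) → ℝ} (hvw : ∀ y, v y ≤ w y)
    (hvm : Measurable v) (hwm : Measurable w)
    {cv cw : ℝ} (hvb : ∀ y, |v y| ≤ cv) (hwb : ∀ y, |w y| ≤ cw)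
    (x : EuclideanSpace ℝ (Fin n)) : dppT Ω ε α β v x ≤ dppT Ω ε α β w x := by
  by_cases hx : x ∈ Ω
  · rw [dppT_mem hx, dppT_mem hx]
    have hnev : (v '' ball x ε).Nonempty := ⟨v x, mem_image_of_mem v (mem_ball_self hε)⟩
    have hnew : (w '' ball x ε).Nonempty := ⟨w x, mem_image_of_mem w (mem_ball_self hε)⟩
    have hbddw : BddAbove (w '' ball x ε) :=
      ⟨cw, by rintro a ⟨y, _, rfl⟩; exact (abs_le.1 (hwb y)).2⟩
    have hbddv : BddBelow (v '' ball x ε) :=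
      ⟨-cv, by rintro a ⟨y, _, rfl⟩; exact (abs_le.1 (hvb y)).1⟩
    have hS : sSup (v '' ball x ε) ≤ sSup (w '' ball x ε) := by
      refine csSup_le hnev ?_
      rintro a ⟨y, hy, rfl⟩
      exact le_trans (hvw y) (le_csSup hbddw (mem_image_of_mem w hy))
    have hI : sInf (v '' ball x ε) ≤ sInf (w '' ball x ε) := by
      refine le_csInf hnew ?_
      rintro b ⟨y, hy, rfl⟩
      exact le_trans (csInf_le hbddv (mem_image_of_mem v hy)) (hvw y)
    have hA : ⨍ y in ball x ε, v y ≤ ⨍ y in ball x ε, w y := by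
      rw [setAverage_eq, setAverage_eq]
      have h1 : ∫ y in ball x ε, v y ≤ ∫ y in ball x ε, w y :=
        setIntegral_mono_on (integrableOn_of_bounded hvm hvb measure_ball_lt_top)
          (integrableOn_of_bounded hwm hwb measure_ball_lt_top) measurableSet_ball
          (fun y _ => hvw y)
      simp only [smul_eq_mul]
      exact mul_le_mul_of_nonneg_left h1 (inv_nonneg.2 ENNReal.toReal_nonneg)
    have hα2 : (0:ℝ) ≤ α / 2 := by linarith
    gcongr
  · rw [dppT_notin hx, dppT_notin hx]; exact hvw x

lemma dppSeq_mono_succ (hε : 0 < ε) (hα : 0 ≤ α) (hβ : 0 ≤ β) (hαβ : α + β = 1)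
    (hΩo : IsOpen Ω) (hF : Measurable F) (hC : 0 ≤ C) (hFb : ∀ x, |F x| ≤ C) :
    ∀ j x, dppSeq Ω ε α β F j x ≤ dppSeq Ω ε α β F (j + 1) x := by
  intro j
  induction j with
  | zero =>
    intro x
    rw [dppSeq_succ]
    by_cases hx : x ∈ Ω
    · rw [dppT_mem hx]
      set m := sInf (F '' bdryStrip Ω ε) with hm
      have h0 : dppSeq Ω ε α β F 0 x = m := by simp [dppSeq_zero, hx, hm]
      have hlb : ∀ y ∈ ball x ε, m ≤ dppSeq Ω ε α β F 0 y := by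
        intro y hy
        rcases ball_subset_union hx hy with hyΩ | hyΓ
        · simp [dppSeq_zero, hyΩ, hm]
        · have : dppSeq Ω ε α β F 0 y = F y := by simp [dppSeq_zero, hyΓ.1]
          rw [this]
          exact csInf_le ⟨-C, by rintro a ⟨z, _, rfl⟩; exact (abs_le.1 (hFb z)).1⟩
            (mem_image_of_mem F hyΓ)
      obtain ⟨h0m, h0b⟩ := dppSeq_bound hε hα hβ hαβ hΩo hF hC hFb 0
      have hne : (dppSeq Ω ε α β F 0 '' ball x ε).Nonempty :=
        ⟨_, mem_image_of_mem _ (mem_ball_self hε)⟩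
      have hbddA : BddAbove (dppSeq Ω ε α β F 0 '' ball x ε) :=
        ⟨C, by rintro a ⟨y, _, rfl⟩; exact (abs_le.1 (h0b y)).2⟩
      have hS : m ≤ sSup (dppSeq Ω ε α β F 0 '' ball x ε) := by
        refine le_trans ?_ (le_csSup hbddA (mem_image_of_mem _ (mem_ball_self hε)))
        rw [h0]
      have hI : m ≤ sInf (dppSeq Ω ε α β F 0 '' ball x ε) := by
        refine le_csInf hne ?_
        rintro b ⟨y, hy, rfl⟩
        exact hlb y hy
      have hA : m ≤ ⨍ y in ball x ε, dppSeq Ω ε α β F 0 y :=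
        setAverage_ball_ge hε h0m h0b hlb
      have : m = (α / 2) * m + (α / 2) * m + β * m := by
        linear_combination (-m) * hαβ
      rw [h0, this]
      have hα2 : (0:ℝ) ≤ α / 2 := by linarith
      gcongr
    · rw [dppT_notin hx]
  | succ j ih =>
    intro x
    rw [dppSeq_succ, dppSeq_succ (j + 1)]
    obtain ⟨hjm, hjb⟩ := dppSeq_bound hε hα hβ hαβ hΩo hF hC hFb j
    obtain ⟨hjm', hjb'⟩ := dppSeq_bound hε hα hβ hαβ hΩo hF hC hFb (j + 1)
    exact dppT_mono hε hα hβ (fun y => by rw [dppSeq_succ] at ih ⊢; exact ih y)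
      hjm hjm' hjb hjb' x

lemma dppSeq_mono (hε : 0 < ε) (hα : 0 ≤ α) (hβ : 0 ≤ β) (hαβ : α + β = 1)
    (hΩo : IsOpen Ω) (hF : Measurable F) (hC : 0 ≤ C) (hFb : ∀ x, |F x| ≤ C)
    (x : EuclideanSpace ℝ (Fin n)) : Monotone fun j => dppSeq Ω ε α β F j x :=
  monotone_nat_of_le_succ (fun j => dppSeq_mono_succ hε hα hβ hαβ hΩo hF hC hFb j x)

lemma dppSeq_bddAbove (hε : 0 < ε) (hα : 0 ≤ α) (hβ : 0 ≤ β) (hαβ : α + β = 1)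
    (hΩo : IsOpen Ω) (hF : Measurable F) (hC : 0 ≤ C) (hFb : ∀ x, |F x| ≤ C)
    (x : EuclideanSpace ℝ (Fin n)) : BddAbove (range fun j => dppSeq Ω ε α β F j x) :=
  ⟨C, by rintro a ⟨j, rfl⟩; exact (abs_le.1 ((dppSeq_bound hε hα hβ hαβ hΩo hF hC hFb j).2 x)).2⟩

lemma dppSeq_tendsto (hε : 0 < ε) (hα : 0 ≤ α) (hβ : 0 ≤ β) (hαβ : α + β = 1)
    (hΩo : IsOpen Ω) (hF : Measurable F) (hC : 0 ≤ C) (hFb : ∀ x, |F x| ≤ C)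
    (x : EuclideanSpace ℝ (Fin n)) :
    Filter.Tendsto (fun j => dppSeq Ω ε α β F j x) Filter.atTop (nhds (dppLim Ω ε α β F x)) :=
  tendsto_atTop_ciSup (dppSeq_mono hε hα hβ hαβ hΩo hF hC hFb x)
    (dppSeq_bddAbove hε hα hβ hαβ hΩo hF hC hFb x)

lemma dppSeq_le_lim (hε : 0 < ε) (hα : 0 ≤ α) (hβ : 0 ≤ β) (hαβ : α + β = 1)
    (hΩo : IsOpen Ω) (hF : Measurable F) (hC : 0 ≤ C) (hFb : ∀ x, |F x| ≤ C)
    (j : ℕ) (x : EuclideanSpace ℝ (Fin n)) :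
    dppSeq Ω ε α β F j x ≤ dppLim Ω ε α β F x :=
  le_ciSup (dppSeq_bddAbove hε hα hβ hαβ hΩo hF hC hFb x) j

lemma dppLim_bound (hε : 0 < ε) (hα : 0 ≤ α) (hβ : 0 ≤ β) (hαβ : α + β = 1)
    (hΩo : IsOpen Ω) (hF : Measurable F) (hC : 0 ≤ C) (hFb : ∀ x, |F x| ≤ C)
    (x : EuclideanSpace ℝ (Fin n)) : |dppLim Ω ε α β F x| ≤ C := by
  rw [abs_le]
  constructor
  · exact le_trans (abs_le.1 ((dppSeq_bound hε hα hβ hαβ hΩo hF hC hFb 0).2 x)).1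
      (dppSeq_le_lim hε hα hβ hαβ hΩo hF hC hFb 0 x)
  · exact ciSup_le fun j => (abs_le.1 ((dppSeq_bound hε hα hβ hαβ hΩo hF hC hFb j).2 x)).2

lemma dppLim_measurable (hε : 0 < ε) (hα : 0 ≤ α) (hβ : 0 ≤ β) (hαβ : α + β = 1)
    (hΩo : IsOpen Ω) (hF : Measurable F) (hC : 0 ≤ C) (hFb : ∀ x, |F x| ≤ C) :
    Measurable (dppLim Ω ε α β F) := by
  refine measurable_of_tendsto_metrizable
    (fun j => (dppSeq_bound hε hα hβ hαβ hΩo hF hC hFb j).1) ?_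
  rw [tendsto_pi_nhds]
  exact fun x => dppSeq_tendsto hε hα hβ hαβ hΩo hF hC hFb x

lemma dppLim_notin (hε : 0 < ε) (hα : 0 ≤ α) (hβ : 0 ≤ β) (hαβ : α + β = 1)
    (hΩo : IsOpen Ω) (hF : Measurable F) (hC : 0 ≤ C) (hFb : ∀ x, |F x| ≤ C)
    {x : EuclideanSpace ℝ (Fin n)} (hx : x ∉ Ω) : dppLim Ω ε α β F x = F x := by
  have : (fun j => dppSeq Ω ε α β F j x) = fun _ => F x := by
    funext j; exact dppSeq_notin' hx j
  rw [dppLim, this]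
  exact ciSup_const

end Mono
section Key

variable {n : ℕ} {Ω : Set (EuclideanSpace ℝ (Fin n))} {ε α β : ℝ}
  {F : EuclideanSpace ℝ (Fin n) → ℝ} {C : ℝ}

noncomputable def sSeq (Ω : Set (EuclideanSpace ℝ (Fin n))) (ε α β : ℝ)
    (F : EuclideanSpace ℝ (Fin n) → ℝ) (j : ℕ) : ℝ :=
  ∫ y in Ω, (dppLim Ω ε α β F y - dppSeq Ω ε α β F j y)

noncomputable def MSeq (Ω : Set (EuclideanSpace ℝ (Fin n))) (ε α β : ℝ)
    (F : EuclideanSpace ℝ (Fin n) → ℝ) (C : ℝ) : ℕ → ℝ :=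
  fun j => Nat.rec (2 * C)
    (fun j Mj => α * Mj + β * (sSeq Ω ε α β F j /
      (volume (ball (0 : EuclideanSpace ℝ (Fin n)) ε)).toReal)) j

lemma MSeq_zero : MSeq Ω ε α β F C 0 = 2 * C := rfl

lemma MSeq_succ (j : ℕ) : MSeq Ω ε α β F C (j + 1) =
    α * MSeq Ω ε α β F C j + β * (sSeq Ω ε α β F j /
      (volume (ball (0 : EuclideanSpace ℝ (Fin n)) ε)).toReal) := rfl

lemma sSeq_nonneg (hε : 0 < ε) (hα : 0 ≤ α) (hβ : 0 ≤ β) (hαβ : α + β = 1)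
    (hΩo : IsOpen Ω) (hF : Measurable F) (hC : 0 ≤ C) (hFb : ∀ x, |F x| ≤ C)
    (j : ℕ) : 0 ≤ sSeq Ω ε α β F j :=
  setIntegral_nonneg hΩo.measurableSet
    (fun y _ => sub_nonneg.2 (dppSeq_le_lim hε hα hβ hαβ hΩo hF hC hFb j y))

lemma sSeq_tendsto (hε : 0 < ε) (hα : 0 ≤ α) (hβ : 0 ≤ β) (hαβ : α + β = 1)
    (hΩo : IsOpen Ω) (hΩb : Bornology.IsBounded Ω)
    (hF : Measurable F) (hC : 0 ≤ C) (hFb : ∀ x, |F x| ≤ C) :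
    Filter.Tendsto (sSeq Ω ε α β F) Filter.atTop (nhds 0) := by
  have h := tendsto_integral_of_dominated_convergence
    (μ := volume.restrict Ω)
    (F := fun j y => dppLim Ω ε α β F y - dppSeq Ω ε α β F j y)
    (f := fun _ => (0 : ℝ)) (fun _ => 2 * C)
    (fun j => ((dppLim_measurable hε hα hβ hαβ hΩo hF hC hFb).sub
      (dppSeq_bound hε hα hβ hαβ hΩo hF hC hFb j).1).aestronglyMeasurable.restrict)
    (integrableOn_const hΩb.measure_lt_top.ne)
    (fun j => Filter.Eventually.of_forall fun y => by
      have h1 := dppLim_bound hε hα hβ hαβ hΩo hF hC hFb y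
      have h2 := (dppSeq_bound hε hα hβ hαβ hΩo hF hC hFb j).2 y
      rw [Real.norm_eq_abs]
      calc |dppLim Ω ε α β F y - dppSeq Ω ε α β F j y| ≤
          |dppLim Ω ε α β F y| + |dppSeq Ω ε α β F j y| := abs_sub _ _
        _ ≤ 2 * C := by linarith)
    (Filter.Eventually.of_forall fun y => by
      have := (tendsto_const_nhds (x := dppLim Ω ε α β F y)
        (f := Filter.atTop (α := ℕ))).sub (dppSeq_tendsto hε hα hβ hαβ hΩo hF hC hFb y)
      simpa using this)
  unfold sSeq
  simpa using h

lemma MSeq_nonneg (hε : 0 < ε) (hα : 0 ≤ α) (hβ : 0 ≤ β) (hαβ : α + β = 1)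
    (hΩo : IsOpen Ω) (hF : Measurable F) (hC : 0 ≤ C) (hFb : ∀ x, |F x| ≤ C)
    (j : ℕ) : 0 ≤ MSeq Ω ε α β F C j := by
  induction j with
  | zero => rw [MSeq_zero]; linarith
  | succ j ih =>
    rw [MSeq_succ]
    have h1 := sSeq_nonneg hε hα hβ hαβ hΩo hF hC hFb j
    have h2 : (0:ℝ) ≤ (volume (ball (0 : EuclideanSpace ℝ (Fin n)) ε)).toReal :=
      ENNReal.toReal_nonneg
    positivity

lemma key_estimate (hε : 0 < ε) (hα : 0 ≤ α) (hβ : 0 ≤ β) (hαβ : α + β = 1)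
    (hΩo : IsOpen Ω) (hΩb : Bornology.IsBounded Ω)
    (hF : Measurable F) (hC : 0 ≤ C) (hFb : ∀ x, |F x| ≤ C) :
    ∀ j x, dppLim Ω ε α β F x - dppSeq Ω ε α β F j x ≤ MSeq Ω ε α β F C j := by
  intro j
  induction j with
  | zero =>
    intro x
    rw [MSeq_zero]
    have h1 := dppLim_bound hε hα hβ hαβ hΩo hF hC hFb x
    have h2 := (dppSeq_bound hε hα hβ hαβ hΩo hF hC hFb 0).2 x
    rw [abs_le] at h1 h2
    linarith [h1.2, h2.1]
  | succ j IH =>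
    set V := (volume (ball (0 : EuclideanSpace ℝ (Fin n)) ε)).toReal with hV
    have hVpos : 0 < V := volume_ball_toReal_pos hε 0
    -- the main claim, for k ≥ j
    have claim : ∀ x ∈ Ω, ∀ k, j ≤ k →
        dppSeq Ω ε α β F (k + 1) x ≤ dppSeq Ω ε α β F (j + 1) x +
          (α * MSeq Ω ε α β F C j + β * (sSeq Ω ε α β F j / V)) := by
      intro x hx k hk
      obtain ⟨hkm, hkb⟩ := dppSeq_bound hε hα hβ hαβ hΩo hF hC hFb k
      obtain ⟨hjm, hjb⟩ := dppSeq_bound hε hα hβ hαβ hΩo hF hC hFb j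
      have hlimm := dppLim_measurable hε hα hβ hαβ hΩo hF hC hFb
      have hlimb := dppLim_bound hε hα hβ hαβ hΩo hF hC hFb
      have hMj := MSeq_nonneg hε hα hβ hαβ hΩo hF hC hFb j
      have hnek : ((dppSeq Ω ε α β F k) '' ball x ε).Nonempty :=
        ⟨_, mem_image_of_mem _ (mem_ball_self hε)⟩
      have hnej : ((dppSeq Ω ε α β F j) '' ball x ε).Nonempty :=
        ⟨_, mem_image_of_mem _ (mem_ball_self hε)⟩
      have hbddAj : BddAbove ((dppSeq Ω ε α β F j) '' ball x ε) :=
        ⟨C, by rintro a ⟨y, _, rfl⟩; exact (abs_le.1 (hjb y)).2⟩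
      have hbddBk : BddBelow ((dppSeq Ω ε α β F k) '' ball x ε) :=
        ⟨-C, by rintro a ⟨y, _, rfl⟩; exact (abs_le.1 (hkb y)).1⟩
      have hkylim : ∀ y, dppSeq Ω ε α β F k y ≤ dppLim Ω ε α β F y :=
        fun y => dppSeq_le_lim hε hα hβ hαβ hΩo hF hC hFb k y
      -- sup estimate
      have hS : sSup ((dppSeq Ω ε α β F k) '' ball x ε) ≤
          sSup ((dppSeq Ω ε α β F j) '' ball x ε) + MSeq Ω ε α β F C j := by
        refine csSup_le hnek ?_
        rintro a ⟨y, hy, rfl⟩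
        have h1 : dppSeq Ω ε α β F k y ≤ dppSeq Ω ε α β F j y + MSeq Ω ε α β F C j := by
          have := IH y
          have := hkylim y
          linarith
        exact le_trans h1 (by
          have := le_csSup hbddAj (mem_image_of_mem (dppSeq Ω ε α β F j) hy)
          linarith)
      -- inf estimate
      have hI : sInf ((dppSeq Ω ε α β F k) '' ball x ε) ≤
          sInf ((dppSeq Ω ε α β F j) '' ball x ε) + MSeq Ω ε α β F C j := by
        have h1 : sInf ((dppSeq Ω ε α β F k) '' ball x ε) - MSeq Ω ε α β F C j ≤
            sInf ((dppSeq Ω ε α β F j) '' ball x ε) := by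
          refine le_csInf hnej ?_
          rintro b ⟨y, hy, rfl⟩
          have h2 : sInf ((dppSeq Ω ε α β F k) '' ball x ε) ≤ dppSeq Ω ε α β F k y :=
            csInf_le hbddBk (mem_image_of_mem _ hy)
          have h3 := hkylim y
          have h4 := IH y
          linarith
        linarith
      -- average estimate
      have hA : (⨍ y in ball x ε, dppSeq Ω ε α β F k y) ≤
          (⨍ y in ball x ε, dppSeq Ω ε α β F j y) + sSeq Ω ε α β F j / V := by
        have hVx : (volume (ball x ε)).toReal = V := by
          rw [hV, Measure.addHaar_ball_center]
        have hIk : IntegrableOn (dppSeq Ω ε α β F k) (ball x ε) volume :=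
          integrableOn_of_bounded hkm hkb measure_ball_lt_top
        have hIj : IntegrableOn (dppSeq Ω ε α β F j) (ball x ε) volume :=
          integrableOn_of_bounded hjm hjb measure_ball_lt_top
        have hIlim : IntegrableOn (dppLim Ω ε α β F) (ball x ε) volume :=
          integrableOn_of_bounded hlimm hlimb measure_ball_lt_top
        have hg : Measurable fun y => dppLim Ω ε α β F y - dppSeq Ω ε α β F j y :=
          hlimm.sub hjm
        have hgb : ∀ y, |dppLim Ω ε α β F y - dppSeq Ω ε α β F j y| ≤ 2 * C := by
          intro y
          have h1 := abs_le.1 (hlimb y); have h2 := abs_le.1 (hjb y)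
          rw [abs_le]; constructor <;> linarith [h1.1, h1.2, h2.1, h2.2]
        -- integral of (lim - seq j) over ball is at most over Ω
        have hsupp : ∫ y in ball x ε, (dppLim Ω ε α β F y - dppSeq Ω ε α β F j y) ≤
            sSeq Ω ε α β F j := by
          have he1 : (fun y => dppLim Ω ε α β F y - dppSeq Ω ε α β F j y) =
              Ω.indicator (fun y => dppLim Ω ε α β F y - dppSeq Ω ε α β F j y) := by
            funext y
            by_cases hy : y ∈ Ω
            · rw [indicator_of_mem hy]
            · rw [indicator_of_notMem hy, dppLim_notin hε hα hβ hαβ hΩo hF hC hFb hy,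
                dppSeq_notin' hy, sub_self]
          calc ∫ y in ball x ε, (dppLim Ω ε α β F y - dppSeq Ω ε α β F j y)
              = ∫ y in ball x ε, Ω.indicator
                  (fun y => dppLim Ω ε α β F y - dppSeq Ω ε α β F j y) y := by rw [← he1]
            _ = ∫ y in ball x ε ∩ Ω, (dppLim Ω ε α β F y - dppSeq Ω ε α β F j y) := by
                rw [setIntegral_indicator hΩo.measurableSet]
            _ ≤ ∫ y in Ω, (dppLim Ω ε α β F y - dppSeq Ω ε α β F j y) := by
                refine setIntegral_mono_set
                  (integrableOn_of_bounded hg hgb hΩb.measure_lt_top)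
                  (Filter.Eventually.of_forall fun y => by
                    simpa using sub_nonneg.2 (dppSeq_le_lim hε hα hβ hαβ hΩo hF hC hFb j y)) ?_
                · exact HasSubset.Subset.eventuallyLE inter_subset_right
            _ = sSeq Ω ε α β F j := rfl
        have hint : ∫ y in ball x ε, dppSeq Ω ε α β F k y ≤
            (∫ y in ball x ε, dppSeq Ω ε α β F j y) + sSeq Ω ε α β F j := by
          have h1 : ∫ y in ball x ε, dppSeq Ω ε α β F k y ≤
              ∫ y in ball x ε, dppLim Ω ε α β F y :=
            setIntegral_mono_on hIk hIlim measurableSet_ball (fun y _ => hkylim y)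
          have h2 : ∫ y in ball x ε, (dppLim Ω ε α β F y - dppSeq Ω ε α β F j y) =
              (∫ y in ball x ε, dppLim Ω ε α β F y) -
                ∫ y in ball x ε, dppSeq Ω ε α β F j y :=
            integral_sub hIlim hIj
          linarith
        rw [setAverage_eq, setAverage_eq]
        simp only [smul_eq_mul, measureReal_def, hVx]
        calc V⁻¹ * ∫ y in ball x ε, dppSeq Ω ε α β F k y
            ≤ V⁻¹ * ((∫ y in ball x ε, dppSeq Ω ε α β F j y) + sSeq Ω ε α β F j) :=
              mul_le_mul_of_nonneg_left hint (inv_nonneg.2 hVpos.le)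
          _ = V⁻¹ * (∫ y in ball x ε, dppSeq Ω ε α β F j y) + sSeq Ω ε α β F j / V := by
              field_simp
      -- combine
      rw [dppSeq_succ k, dppSeq_succ j, dppT_mem hx, dppT_mem hx]
      have hα2 : (0:ℝ) ≤ α / 2 := by linarith
      have t1 := mul_le_mul_of_nonneg_left hS hα2
      have t2 := mul_le_mul_of_nonneg_left hI hα2
      have t3 := mul_le_mul_of_nonneg_left hA hβ
      have hexp : α / 2 * (sSup ((dppSeq Ω ε α β F j) '' ball x ε) + MSeq Ω ε α β F C j) +
          α / 2 * (sInf ((dppSeq Ω ε α β F j) '' ball x ε) + MSeq Ω ε α β F C j) +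
          β * ((⨍ y in ball x ε, dppSeq Ω ε α β F j y) + sSeq Ω ε α β F j / V) =
          (α / 2 * sSup ((dppSeq Ω ε α β F j) '' ball x ε) +
            α / 2 * sInf ((dppSeq Ω ε α β F j) '' ball x ε) +
            β * ⨍ y in ball x ε, dppSeq Ω ε α β F j y) +
          (α * MSeq Ω ε α β F C j + β * (sSeq Ω ε α β F j / V)) := by ring
      linarith
    intro x
    by_cases hx : x ∈ Ω
    · rw [MSeq_succ, sub_le_iff_le_add]
      have : dppLim Ω ε α β F x = ⨆ k, dppSeq Ω ε α β F k x := rfl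
      rw [this]
      refine ciSup_le fun k => ?_
      have h1 : dppSeq Ω ε α β F k x ≤ dppSeq Ω ε α β F (k + j + 1) x :=
        dppSeq_mono hε hα hβ hαβ hΩo hF hC hFb x (by omega)
      have h2 := claim x hx (k + j) (by omega)
      have h3 : k + j + 1 = (k + j) + 1 := rfl
      rw [h3] at h1
      linarith
    · rw [dppLim_notin hε hα hβ hαβ hΩo hF hC hFb hx, dppSeq_notin' hx, sub_self]
      exact MSeq_nonneg hε hα hβ hαβ hΩo hF hC hFb (j + 1)

lemma MSeq_tendsto (hε : 0 < ε) (hα : 0 ≤ α) (hβ : 0 < β) (hαβ : α + β = 1)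
    (hΩo : IsOpen Ω) (hΩb : Bornology.IsBounded Ω)
    (hF : Measurable F) (hC : 0 ≤ C) (hFb : ∀ x, |F x| ≤ C) :
    Filter.Tendsto (MSeq Ω ε α β F C) Filter.atTop (nhds 0) := by
  refine tendsto_rec_zero hα (by linarith) (MSeq_nonneg hε hα hβ.le hαβ hΩo hF hC hFb)
    (fun j => le_of_eq (MSeq_succ j)) ?_
  have h := ((sSeq_tendsto hε hα hβ.le hαβ hΩo hΩb hF hC hFb).div_const
    (volume (ball (0 : EuclideanSpace ℝ (Fin n)) ε)).toReal).const_mul β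
  simpa using h

end Key
section Final

variable {n : ℕ} {Ω : Set (EuclideanSpace ℝ (Fin n))} {ε α β : ℝ}
  {F : EuclideanSpace ℝ (Fin n) → ℝ} {C : ℝ}

lemma dppLim_dpp (hε : 0 < ε) (hα : 0 ≤ α) (hβ : 0 < β) (hαβ : α + β = 1)
    (hΩo : IsOpen Ω) (hΩb : Bornology.IsBounded Ω)
    (hF : Measurable F) (hC : 0 ≤ C) (hFb : ∀ x, |F x| ≤ C)
    {x : EuclideanSpace ℝ (Fin n)} (hx : x ∈ Ω) :
    dppLim Ω ε α β F x =
      α / 2 * sSup (dppLim Ω ε α β F '' ball x ε) +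
        α / 2 * sInf (dppLim Ω ε α β F '' ball x ε) +
        β * ⨍ y in ball x ε, dppLim Ω ε α β F y := by
  have hβ0 := hβ.le
  have hlimm := dppLim_measurable hε hα hβ0 hαβ hΩo hF hC hFb
  have hlimb := dppLim_bound hε hα hβ0 hαβ hΩo hF hC hFb
  have hMt := MSeq_tendsto hε hα hβ hαβ hΩo hΩb hF hC hFb
  have hkey := key_estimate hε hα hβ0 hαβ hΩo hΩb hF hC hFb
  have hle : ∀ j y, dppSeq Ω ε α β F j y ≤ dppLim Ω ε α β F y :=
    fun j y => dppSeq_le_lim hε hα hβ0 hαβ hΩo hF hC hFb j y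
  have hnelim : (dppLim Ω ε α β F '' ball x ε).Nonempty :=
    ⟨_, mem_image_of_mem _ (mem_ball_self hε)⟩
  have hbddAlim : BddAbove (dppLim Ω ε α β F '' ball x ε) :=
    ⟨C, by rintro a ⟨y, _, rfl⟩; exact (abs_le.1 (hlimb y)).2⟩
  have hbddBlim : BddBelow (dppLim Ω ε α β F '' ball x ε) :=
    ⟨-C, by rintro a ⟨y, _, rfl⟩; exact (abs_le.1 (hlimb y)).1⟩
  have hIlim : IntegrableOn (dppLim Ω ε α β F) (ball x ε) volume :=
    integrableOn_of_bounded hlimm hlimb measure_ball_lt_top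
  -- basic per-j facts
  have hjm : ∀ j, Measurable (dppSeq Ω ε α β F j) :=
    fun j => (dppSeq_bound hε hα hβ0 hαβ hΩo hF hC hFb j).1
  have hjb : ∀ j x, |dppSeq Ω ε α β F j x| ≤ C :=
    fun j => (dppSeq_bound hε hα hβ0 hαβ hΩo hF hC hFb j).2
  have hnej : ∀ j, ((dppSeq Ω ε α β F j) '' ball x ε).Nonempty :=
    fun j => ⟨_, mem_image_of_mem _ (mem_ball_self hε)⟩
  have hbddAj : ∀ j, BddAbove ((dppSeq Ω ε α β F j) '' ball x ε) :=
    fun j => ⟨C, by rintro a ⟨y, _, rfl⟩; exact (abs_le.1 (hjb j y)).2⟩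
  have hbddBj : ∀ j, BddBelow ((dppSeq Ω ε α β F j) '' ball x ε) :=
    fun j => ⟨-C, by rintro a ⟨y, _, rfl⟩; exact (abs_le.1 (hjb j y)).1⟩
  -- sup bounds
  have hSle : ∀ j, sSup (dppSeq Ω ε α β F j '' ball x ε) ≤
      sSup (dppLim Ω ε α β F '' ball x ε) := by
    intro j
    refine csSup_le (hnej j) ?_
    rintro a ⟨y, hy, rfl⟩
    exact le_trans (hle j y) (le_csSup hbddAlim (mem_image_of_mem _ hy))
  have hSge : ∀ j, sSup (dppLim Ω ε α β F '' ball x ε) - MSeq Ω ε α β F C j ≤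
      sSup (dppSeq Ω ε α β F j '' ball x ε) := by
    intro j
    rw [sub_le_iff_le_add]
    refine csSup_le hnelim ?_
    rintro a ⟨y, hy, rfl⟩
    have h1 := hkey j y
    have h2 := le_csSup (hbddAj j) (mem_image_of_mem (dppSeq Ω ε α β F j) hy)
    linarith
  -- inf bounds
  have hIle : ∀ j, sInf (dppSeq Ω ε α β F j '' ball x ε) ≤
      sInf (dppLim Ω ε α β F '' ball x ε) := by
    intro j
    refine le_csInf hnelim ?_
    rintro b ⟨y, hy, rfl⟩
    exact le_trans (csInf_le (hbddBj j) (mem_image_of_mem _ hy)) (hle j y)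
  have hIge : ∀ j, sInf (dppLim Ω ε α β F '' ball x ε) - MSeq Ω ε α β F C j ≤
      sInf (dppSeq Ω ε α β F j '' ball x ε) := by
    intro j
    refine le_csInf (hnej j) ?_
    rintro b ⟨y, hy, rfl⟩
    have h1 := hkey j y
    have h2 := csInf_le hbddBlim (mem_image_of_mem (dppLim Ω ε α β F) hy)
    linarith
  -- average bounds
  have hAle : ∀ j, (⨍ y in ball x ε, dppSeq Ω ε α β F j y) ≤
      ⨍ y in ball x ε, dppLim Ω ε α β F y := by
    intro j
    rw [setAverage_eq, setAverage_eq]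
    have h1 : ∫ y in ball x ε, dppSeq Ω ε α β F j y ≤
        ∫ y in ball x ε, dppLim Ω ε α β F y :=
      setIntegral_mono_on (integrableOn_of_bounded (hjm j) (hjb j) measure_ball_lt_top)
        hIlim measurableSet_ball (fun y _ => hle j y)
    simp only [smul_eq_mul]
    exact mul_le_mul_of_nonneg_left h1 (inv_nonneg.2 ENNReal.toReal_nonneg)
  have hAge : ∀ j, (⨍ y in ball x ε, dppLim Ω ε α β F y) - MSeq Ω ε α β F C j ≤
      ⨍ y in ball x ε, dppSeq Ω ε α β F j y := by
    intro j
    rw [sub_le_iff_le_add]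
    have hgm : Measurable fun y => dppLim Ω ε α β F y - dppSeq Ω ε α β F j y :=
      hlimm.sub (hjm j)
    have hgb : ∀ y, |dppLim Ω ε α β F y - dppSeq Ω ε α β F j y| ≤ 2 * C := by
      intro y
      have h1 := abs_le.1 (hlimb y); have h2 := abs_le.1 (hjb j y)
      rw [abs_le]; constructor <;> linarith [h1.1, h1.2, h2.1, h2.2]
    have havg : ⨍ y in ball x ε, (dppLim Ω ε α β F y - dppSeq Ω ε α β F j y) ≤
        MSeq Ω ε α β F C j :=
      setAverage_ball_le hε hgm hgb (fun y _ => hkey j y)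
    have hsub : ⨍ y in ball x ε, (dppLim Ω ε α β F y - dppSeq Ω ε α β F j y) =
        (⨍ y in ball x ε, dppLim Ω ε α β F y) -
          ⨍ y in ball x ε, dppSeq Ω ε α β F j y := by
      rw [setAverage_eq, setAverage_eq, setAverage_eq,
        integral_sub hIlim (integrableOn_of_bounded (hjm j) (hjb j) measure_ball_lt_top)]
      simp only [smul_eq_mul]
      ring
    rw [hsub] at havg
    linarith
  -- squeeze
  have hSt : Filter.Tendsto (fun j => sSup (dppSeq Ω ε α β F j '' ball x ε))
      Filter.atTop (nhds (sSup (dppLim Ω ε α β F '' ball x ε))) := by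
    refine tendsto_of_tendsto_of_tendsto_of_le_of_le
      (g := fun j => sSup (dppLim Ω ε α β F '' ball x ε) - MSeq Ω ε α β F C j)
      (h := fun _ => sSup (dppLim Ω ε α β F '' ball x ε)) ?_ tendsto_const_nhds hSge hSle
    simpa using tendsto_const_nhds.sub hMt
  have hIt : Filter.Tendsto (fun j => sInf (dppSeq Ω ε α β F j '' ball x ε))
      Filter.atTop (nhds (sInf (dppLim Ω ε α β F '' ball x ε))) := by
    refine tendsto_of_tendsto_of_tendsto_of_le_of_le
      (g := fun j => sInf (dppLim Ω ε α β F '' ball x ε) - MSeq Ω ε α β F C j)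
      (h := fun _ => sInf (dppLim Ω ε α β F '' ball x ε)) ?_ tendsto_const_nhds hIge hIle
    simpa using tendsto_const_nhds.sub hMt
  have hAt : Filter.Tendsto (fun j => ⨍ y in ball x ε, dppSeq Ω ε α β F j y)
      Filter.atTop (nhds (⨍ y in ball x ε, dppLim Ω ε α β F y)) := by
    refine tendsto_of_tendsto_of_tendsto_of_le_of_le
      (g := fun j => (⨍ y in ball x ε, dppLim Ω ε α β F y) - MSeq Ω ε α β F C j)
      (h := fun _ => ⨍ y in ball x ε, dppLim Ω ε α β F y) ?_ tendsto_const_nhds hAge hAle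
    simpa using tendsto_const_nhds.sub hMt
  have hRt : Filter.Tendsto (fun j => dppSeq Ω ε α β F (j + 1) x) Filter.atTop
      (nhds (α / 2 * sSup (dppLim Ω ε α β F '' ball x ε) +
        α / 2 * sInf (dppLim Ω ε α β F '' ball x ε) +
        β * ⨍ y in ball x ε, dppLim Ω ε α β F y)) := by
    have heq : (fun j => dppSeq Ω ε α β F (j + 1) x) =
        fun j => α / 2 * sSup (dppSeq Ω ε α β F j '' ball x ε) +
          α / 2 * sInf (dppSeq Ω ε α β F j '' ball x ε) +
          β * ⨍ y in ball x ε, dppSeq Ω ε α β F j y := by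
      funext j
      rw [dppSeq_succ, dppT_mem hx]
    rw [heq]
    exact (((hSt.const_mul (α / 2)).add (hIt.const_mul (α / 2))).add (hAt.const_mul β))
  have hLt : Filter.Tendsto (fun j => dppSeq Ω ε α β F (j + 1) x) Filter.atTop
      (nhds (dppLim Ω ε α β F x)) :=
    (dppSeq_tendsto hε hα hβ0 hαβ hΩo hF hC hFb x).comp (Filter.tendsto_add_atTop_nat 1)
  exact tendsto_nhds_unique hLt hRt

lemma dppSeq_tendstoUniformly (hε : 0 < ε) (hα : 0 ≤ α) (hβ : 0 < β) (hαβ : α + β = 1)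
    (hΩo : IsOpen Ω) (hΩb : Bornology.IsBounded Ω)
    (hF : Measurable F) (hC : 0 ≤ C) (hFb : ∀ x, |F x| ≤ C) :
    TendstoUniformlyOn (dppSeq Ω ε α β F) (dppLim Ω ε α β F) Filter.atTop
      (Ω ∪ bdryStrip Ω ε) := by
  have hβ0 := hβ.le
  rw [Metric.tendstoUniformlyOn_iff]
  intro δ hδ
  have hMt := MSeq_tendsto hε hα hβ hαβ hΩo hΩb hF hC hFb
  have hev : ∀ᶠ j in Filter.atTop, MSeq Ω ε α β F C j < δ :=
    hMt.eventually_lt_const hδ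
  filter_upwards [hev] with j hj x _
  rw [Real.dist_eq]
  have h1 := key_estimate hε hα hβ0 hαβ hΩo hΩb hF hC hFb j x
  have h2 := dppSeq_le_lim hε hα hβ0 hαβ hΩo hF hC hFb j x
  rw [abs_of_nonneg (by linarith)]
  linarith

end Final

/-- Existence of a p-harmonious function with given bounded Borel boundary data:
it solves the DPP, agrees with `F` on the boundary strip, and is the uniform limit
of the natural iteration started from `inf F`. -/
theorem dpp_exists {n : ℕ} (hn : 0 < n) (Ω : Set (EuclideanSpace ℝ (Fin n)))
    (hΩo : IsOpen Ω) (hΩc : IsConnected Ω) (hΩb : Bornology.IsBounded Ω)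
    (ε α β : ℝ) (hε : 0 < ε) (hα : 0 ≤ α) (hβ : 0 < β) (hαβ : α + β = 1)
    (F : EuclideanSpace ℝ (Fin n) → ℝ) (hF : Measurable F)
    (C : ℝ) (hFb : ∀ x, |F x| ≤ C) :
    ∃ u : EuclideanSpace ℝ (Fin n) → ℝ,
      Measurable u ∧ (∃ M, ∀ x, |u x| ≤ M) ∧
      (∀ x ∈ bdryStrip Ω ε, u x = F x) ∧
      (∀ x ∈ Ω, u x =
        α / 2 * sSup (u '' ball x ε) + α / 2 * sInf (u '' ball x ε) +
          β * ⨍ y in ball x ε, u y) ∧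
      (∀ useq : ℕ → EuclideanSpace ℝ (Fin n) → ℝ,
        useq 0 = (fun x => if x ∈ Ω then sInf (F '' bdryStrip Ω ε) else F x) →
        (∀ j, useq (j + 1) = dppT Ω ε α β (useq j)) →
        TendstoUniformlyOn useq u Filter.atTop (Ω ∪ bdryStrip Ω ε)) := by
  have hC : 0 ≤ C := le_trans (abs_nonneg _) (hFb 0)
  have hβ0 := hβ.le
  refine ⟨dppLim Ω ε α β F, dppLim_measurable hε hα hβ0 hαβ hΩo hF hC hFb,
    ⟨C, dppLim_bound hε hα hβ0 hαβ hΩo hF hC hFb⟩, ?_, ?_, ?_⟩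
  · intro x hx
    exact dppLim_notin hε hα hβ0 hαβ hΩo hF hC hFb hx.1
  · intro x hx
    exact dppLim_dpp hε hα hβ hαβ hΩo hΩb hF hC hFb hx
  · intro useq h0 hrec
    have huseq : useq = dppSeq Ω ε α β F := by
      funext j
      induction j with
      | zero => rw [h0]; rfl
      | succ j ih => rw [hrec j, ih, ← dppSeq_succ]
    rw [huseq]
    exact dppSeq_tendstoUniformly hε hα hβ hαβ hΩo hΩb hF hC hFb
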